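/- The ending position of the n-th maximal run of any infinite paperfolding sequence is either 2n or 2n - 1, for all n ≥ 1. -/

import Mathlib

def foldAux : List ℤ → List ℤ
  | [] => []
  | a :: f => foldAux f ++ a :: (foldAux f).reverse.map (fun x => -x)

lemma foldAux_length (l : List ℤ) : (foldAux l).length = 2 ^ l.length - 1 := by
  induction l with
  | nil => simp [foldAux]
  | cons a l ih =>
    have h1 : 1 ≤ 2 ^ l.length := Nat.one_le_two_pow
    simp [foldAux, ih, pow_succ]
    omega

lemma foldAux_mem (l : List ℤ) (h : ∀ a ∈ l, a = -1 ∨ a = 1) :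
    ∀ x ∈ foldAux l, x = -1 ∨ x = 1 := by
  induction l with
  | nil => simp [foldAux]
  | cons a l ih =>
    intro x hx
    have h' : ∀ b ∈ l, b = -1 ∨ b = 1 := fun b hb => h b (List.mem_cons_of_mem _ hb)
    simp only [foldAux, List.mem_append, List.mem_cons, List.mem_map, List.mem_reverse] at hx
    rcases hx with hx | hx | ⟨y, hy, rfl⟩
    · exact ih h' x hx
    · exact hx ▸ h a (List.mem_cons_self (a := a) (l := l))
    · rcases ih h' y hy with h1 | h1 <;> simp [h1]

lemma foldAux_alt (l : List ℤ) : ∀ k, 2*k+2 < (foldAux l).length →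
    (foldAux l).getD (2*k) 0 = -((foldAux l).getD (2*k+2) 0) := by
  induction l with
  | nil => intro k hk; simp [foldAux] at hk
  | cons a l ih =>
    intro k hk
    set w := foldAux l with hw
    set L := w.length with hL
    have hlen : L = 2 ^ l.length - 1 := foldAux_length l
    have h1 : 1 ≤ 2 ^ l.length := Nat.one_le_two_pow
    have htot : (foldAux (a :: l)).length = 2*L + 1 := by
      simp [foldAux, ← hw]
      omega
    rw [htot] at hk
    have hneg : ∀ j, j < L → (w.reverse.map (fun x => -x)).getD j 0 = -(w.getD (L-1-j) 0) := by
      intro j hj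
      rw [List.getD_eq_getElem _ _ (by simpa using hj), List.getElem_map,
        List.getElem_reverse, List.getD_eq_getElem _ _ (by omega)]
    have hOdd : L = 0 ∨ 2 ∣ (L + 1) := by
      rcases Nat.eq_zero_or_pos l.length with h0 | h0
      · left; simp [hlen, List.length_eq_zero_iff.mp h0, foldAux, hL, hw]
      · right
        have : (2:ℕ) ∣ 2 ^ l.length := dvd_pow_self 2 (by omega)
        omega
    show (w ++ a :: w.reverse.map (fun x => -x)).getD (2*k) 0
        = -((w ++ a :: w.reverse.map (fun x => -x)).getD (2*k+2) 0)
    rcases lt_or_ge (2*k+2) L with hc | hc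
    · rw [List.getD_append _ _ _ _ (by omega), List.getD_append _ _ _ _ (by omega)]
      exact ih k (by omega)
    · -- 2*k+2 ≥ L; L odd (or 0, impossible)
      have hL1 : 2 ∣ L + 1 := by rcases hOdd with h | h <;> omega
      -- 2*k ≠ L and 2*k+2 ≠ L since L is odd
      rcases eq_or_lt_of_le hc with hc2 | hc2
      · omega
      rcases lt_or_ge (2*k) L with hd | hd
      · -- 2*k = L - 1, 2*k+2 = L+1
        have hkL : 2*k = L - 1 := by omega
        rw [List.getD_append _ _ _ _ (by omega),
          List.getD_append_right _ _ _ _ (by omega)]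
        have : 2*k+2 - L = 0 + 1 := by omega
        rw [this, List.getD_cons_succ, hneg 0 (by omega), hkL]
        norm_num
      · -- both beyond: 2*k ≥ L+1 (2*k ≠ L since L odd)
        have hd2 : 2*k ≥ L + 1 := by omega
        set j := 2*k - L - 1 with hj
        have hj2 : 2 ∣ j := by omega
        have hjL : j + 3 ≤ L := by omega
        rw [List.getD_append_right _ _ _ _ (by omega),
          List.getD_append_right _ _ _ _ (by omega)]
        have e1 : 2*k - L = j + 1 := by omega
        have e2 : 2*k+2 - L = (j+2) + 1 := by omega
        rw [e1, e2, List.getD_cons_succ, List.getD_cons_succ,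
          hneg j (by omega), hneg (j+2) (by omega)]
        obtain ⟨k', hk'⟩ : ∃ k', L - 3 - j = 2 * k' := by
          have : 2 ∣ L - 3 - j := by omega
          exact this
        have := ih k' (by omega)
        have e3 : L - 1 - j = 2*k' + 2 := by omega
        have e4 : L - 1 - (j+2) = 2*k' := by omega
        rw [e3, e4, this]
        ring

def paper (f : List ℤ) : List ℤ := foldAux f.reverse

def runLengths (w : List ℤ) : List ℕ := (w.splitBy (fun a b => a == b)).map List.length

def IsLimit (f : ℕ → ℤ) (p : ℕ → ℤ) : Prop :=
  ∀ m k, k < (paper ((List.range m).map f)).length →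
    p (k + 1) = (paper ((List.range m).map f)).getD k 0

def IsRunEnds (p : ℕ → ℤ) (E : ℕ → ℕ) : Prop :=
  E 0 = 0 ∧ StrictMono E ∧ ∀ m, 1 ≤ m → ((∃ n, 1 ≤ n ∧ E n = m) ↔ p m ≠ p (m + 1))

lemma paper_length (f : ℕ → ℤ) (m : ℕ) :
    (paper ((List.range m).map f)).length = 2 ^ m - 1 := by
  simp [paper, foldAux_length]

lemma p_mem (f p : ℕ → ℤ) (hf : ∀ n, f n = -1 ∨ f n = 1) (hp : IsLimit f p) :
    ∀ k, p (k + 1) = -1 ∨ p (k + 1) = 1 := by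
  intro k
  have h2 : k + 2 ≤ 2 ^ (k + 1) := Nat.lt_two_pow_self (n := k + 1)
  have hk : k < (paper ((List.range (k+1)).map f)).length := by
    rw [paper_length]; omega
  rw [hp (k+1) k hk, List.getD_eq_getElem _ _ hk]
  refine foldAux_mem _ ?_ _ (List.getElem_mem _)
  intro a ha
  rw [List.mem_reverse, List.mem_map] at ha
  obtain ⟨i, _, rfl⟩ := ha
  exact hf i

lemma p_alt (f p : ℕ → ℤ) (hp : IsLimit f p) :
    ∀ k, p (2*k + 1) = -(p (2*k + 3)) := by
  intro k
  set m := 2*k + 4 with hm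
  have h2 : m < 2 ^ m := Nat.lt_two_pow_self (n := m)
  have hk : 2*k + 2 < (paper ((List.range m).map f)).length := by
    rw [paper_length]; omega
  have e1 := hp m (2*k) (by omega)
  have e2 := hp m (2*k+2) hk
  rw [e1, show 2*k+3 = (2*k+2)+1 by omega, e2]
  exact foldAux_alt _ k (by simpa [paper] using hk)

theorem runEnd_two_n_or_pred (f p : ℕ → ℤ) (E : ℕ → ℕ)
    (hf : ∀ n, f n = -1 ∨ f n = 1) (hp : IsLimit f p) (hE : IsRunEnds p E) :
    ∀ n, 1 ≤ n → E n = 2 * n ∨ E n = 2 * n - 1 := by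
  obtain ⟨hE0, hmono, hiff⟩ := hE
  -- exactly one run end in each pair {2k+1, 2k+2}
  have pairs : ∀ k, (p (2*k+1) ≠ p (2*k+2)) ↔ ¬(p (2*k+2) ≠ p (2*k+3)) := by
    intro k
    have h1 := p_mem f p hf hp (2*k)
    have h2 := p_mem f p hf hp (2*k+1)
    have h3 := p_alt f p hp k
    rw [show 2*k+1+1 = 2*k+2 by omega] at h2
    have h4 : p (2*k+3) = -(p (2*k+1)) := by omega
    rw [h4]
    rcases h1 with h1 | h1 <;> rcases h2 with h2 | h2 <;> rw [h1, h2] <;> norm_num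
  have hEpos : ∀ n, 1 ≤ n → 1 ≤ E n := by
    intro n hn
    have := hmono (show 0 < n from hn)
    omega
  have hEend : ∀ n, 1 ≤ n → p (E n) ≠ p (E n + 1) := by
    intro n hn
    exact (hiff (E n) (hEpos n hn)).mp ⟨n, hn, rfl⟩
  have key : ∀ n, E n ≤ 2*n ∧ (1 ≤ n → 2*n - 1 ≤ E n) := by
    intro n
    induction n with
    | zero => simp [hE0]
    | succ n ih =>
      obtain ⟨ih1, ih2⟩ := ih
      have hsucc : E n < E (n+1) := hmono (lt_add_one n)
      -- lower bound
      have hlow : 2*(n+1) - 1 ≤ E (n+1) := by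
        rcases Nat.eq_zero_or_pos n with rfl | hn
        · have := hEpos 1 le_rfl; omega
        · have h2n : 2*n - 1 ≤ E n := ih2 hn
          by_contra hcon
          -- then E (n+1) = 2*n and E n = 2*n - 1, both run ends in pair (n-1)
          have he1 : E (n+1) = 2*n := by omega
          have he2 : E n = 2*n - 1 := by omega
          have r1 := hEend n hn
          have r2 := hEend (n+1) (by omega)
          rw [he2] at r1
          rw [he1] at r2
          have := (pairs (n-1)).mp (by rw [show 2*(n-1)+1 = 2*n-1 by omega,
            show 2*(n-1)+2 = 2*n by omega]; exact (by rw [show 2*n-1+1 = 2*n by omega] at r1; exact r1))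
          rw [show 2*(n-1)+2 = 2*n by omega, show 2*(n-1)+3 = 2*n+1 by omega] at this
          exact this r2
      refine ⟨?_, fun _ => hlow⟩
      -- upper bound: some run end in pair n = {2n+1, 2n+2}
      have hub : ∃ m, m = 2*n+1 ∨ m = 2*n+2 ∧ True := ⟨2*n+1, Or.inl rfl⟩
      by_cases hr : p (2*n+1) ≠ p (2*n+2)
      · obtain ⟨j, hj1, hj2⟩ := (hiff (2*n+1) (by omega)).mpr
          (by rw [show 2*n+1+1 = 2*n+2 by omega]; exact hr)
        have : n < j := by
          have := hmono.lt_iff_lt (a := n) (b := j)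
          omega
        have := hmono.monotone (show n+1 ≤ j from this)
        omega
      · have hr2 : p (2*n+2) ≠ p (2*n+3) := by
          have := pairs n
          tauto
        obtain ⟨j, hj1, hj2⟩ := (hiff (2*n+2) (by omega)).mpr
          (by rw [show 2*n+2+1 = 2*n+3 by omega]; exact hr2)
        have : n < j := by
          have := hmono.lt_iff_lt (a := n) (b := j)
          omega
        have := hmono.monotone (show n+1 ≤ j from this)
        omega
  intro n hn
  obtain ⟨h1, h2⟩ := key n
  have := h2 hn
  omega
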